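/- Let A be an n×n real SPSD matrix, let Q ∈ ℝ^{n×ℓ}, and let 1 ≤ k < n. Then the minimum of ‖A − AQC‖_F over all matrices C ∈ ℝ^{ℓ×n} with rank(C) ≤ k is at most the minimum of ‖A − QC‖_F over all matrices C ∈ ℝ^{ℓ×n} with rank(C) ≤ k. In other words, the best Frobenius-norm rank-k approximation of A whose column space is constrained to lie in the column space of AQ is at least as accurate as the best one constrained to the column space of Q. -/

import Mathlib

open Matrix BigOperators

/-- `M = U * diagonal μ * Uᵀ` is a spectral (eigen)decomposition of the symmetric matrix `M`,
with orthogonal `U` and eigenvalues `μ` listed in nonincreasing order. -/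
def IsSpectralDecomp {n : ℕ} (M U : Matrix (Fin n) (Fin n) ℝ) (μ : Fin n → ℝ) : Prop :=
  Uᵀ * U = 1 ∧ Antitone μ ∧ M = U * Matrix.diagonal μ * Uᵀ

/-- Truncation of a spectral decomposition to its `k` largest (first `k`) eigenvalues:
the best rank-`k` approximation `M_(k)` associated with the decomposition `(U, μ)`. -/
noncomputable def trunc {n : ℕ} (k : ℕ) (U : Matrix (Fin n) (Fin n) ℝ) (μ : Fin n → ℝ) :
    Matrix (Fin n) (Fin n) ℝ :=
  U * Matrix.diagonal (fun i : Fin n => if (i : ℕ) < k then μ i else 0) * Uᵀ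

/-- `f` is operator monotone on SPSD matrices: for all `m` and all `m × m` SPSD matrices
`B ⪰ C ⪰ 0`, one has `f(B) ⪰ f(C)`, where matrix functions are computed through (any)
spectral decomposition. -/
def OperatorMonotone (f : ℝ → ℝ) : Prop :=
  ∀ (m : ℕ) (B C U V : Matrix (Fin m) (Fin m) ℝ) (β γ : Fin m → ℝ),
    IsSpectralDecomp B U β → IsSpectralDecomp C V γ →
    B.PosSemidef → C.PosSemidef → (B - C).PosSemidef →
    (U * Matrix.diagonal (f ∘ β) * Uᵀ - V * Matrix.diagonal (f ∘ γ) * Vᵀ).PosSemidef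

/-- Squared Frobenius norm `‖M‖_F² = Σ_{i,j} M_{ij}²`. -/
noncomputable def frobSq {m l : ℕ} (M : Matrix (Fin m) (Fin l) ℝ) : ℝ :=
  ∑ i, ∑ j, (M i j) ^ 2

/-- Frobenius norm. -/
noncomputable def frobNorm {m l : ℕ} (M : Matrix (Fin m) (Fin l) ℝ) : ℝ :=
  Real.sqrt (frobSq M)

/-- The eigenvalues of a Hermitian matrix listed in nonincreasing order:
`eigsDesc hM i` is the `(i+1)`-st largest eigenvalue of `M`. -/
noncomputable def eigsDesc {m : ℕ} {M : Matrix (Fin m) (Fin m) ℝ} (hM : M.IsHermitian) :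
    Fin m → ℝ :=
  fun i => (hM.eigenvalues ∘ Tuple.sort hM.eigenvalues) i.rev

/-- The singular values of `M` in nonincreasing order: `svDesc M i` is the `(i+1)`-st largest
singular value of `M`, i.e. the square root of the `(i+1)`-st largest eigenvalue of `MᴴM`. -/
noncomputable def svDesc {m l : ℕ} (M : Matrix (Fin m) (Fin l) ℝ) : Fin l → ℝ :=
  fun i => Real.sqrt (eigsDesc (Matrix.isHermitian_conjTranspose_mul_self M) i)

/-- Nuclear norm: the sum of the singular values. -/
noncomputable def nuclearNorm {m l : ℕ} (M : Matrix (Fin m) (Fin l) ℝ) : ℝ :=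
  ∑ i, svDesc M i

/-- Operator (spectral) norm: the largest singular value. -/
noncomputable def opNorm {m l : ℕ} (M : Matrix (Fin m) (Fin l) ℝ) : ℝ :=
  ⨆ i, svDesc M i

/-- `p`-th power of the Schatten `p`-norm: `‖M‖_(p)^p = Σᵢ σᵢ(M)^p`. -/
noncomputable def schattenPow {m l : ℕ} (p : ℝ) (M : Matrix (Fin m) (Fin l) ℝ) : ℝ :=
  ∑ i, svDesc M i ^ p

/-- Schatten `p`-norm: `‖M‖_(p) = (Σᵢ σᵢ(M)^p)^(1/p)`. -/
noncomputable def schattenNorm {m l : ℕ} (p : ℝ) (M : Matrix (Fin m) (Fin l) ℝ) : ℝ :=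
  (schattenPow p M) ^ (1 / p)

/-- `P` is the orthogonal projection onto the column space of `M`. -/
def IsOrthProjOnto {m l : ℕ} (P : Matrix (Fin m) (Fin m) ℝ) (M : Matrix (Fin m) (Fin l) ℝ) :
    Prop :=
  Pᵀ = P ∧ P * P = P ∧ P * M = M ∧ ∃ Y : Matrix (Fin l) (Fin m) ℝ, P = M * Y

section PinvH
variable {n : ℕ} {S : Matrix (Fin n) (Fin n) ℝ}

noncomputable def pinvH (hS : S.IsHermitian) : Matrix (Fin n) (Fin n) ℝ :=
  (hS.eigenvectorUnitary : Matrix (Fin n) (Fin n) ℝ) *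
    Matrix.diagonal (fun i => (hS.eigenvalues i)⁻¹) *
    star (hS.eigenvectorUnitary : Matrix (Fin n) (Fin n) ℝ)

lemma spectral_real (hS : S.IsHermitian) :
    S = (hS.eigenvectorUnitary : Matrix (Fin n) (Fin n) ℝ) *
      Matrix.diagonal hS.eigenvalues *
      star (hS.eigenvectorUnitary : Matrix (Fin n) (Fin n) ℝ) := by
  have h := hS.spectral_theorem
  simpa [RCLike.ofReal_real_eq_id] using h

lemma sandwich_mul (U : Matrix (Fin n) (Fin n) ℝ) (hU : star U * U = 1) (d e : Fin n → ℝ) :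
    (U * Matrix.diagonal d * star U) * (U * Matrix.diagonal e * star U) =
      U * Matrix.diagonal (fun i => d i * e i) * star U := by
  have h : Matrix.diagonal d * Matrix.diagonal e = Matrix.diagonal (fun i => d i * e i) := by
    rw [Matrix.diagonal_mul_diagonal]
  calc (U * Matrix.diagonal d * star U) * (U * Matrix.diagonal e * star U)
      = U * Matrix.diagonal d * (star U * U) * Matrix.diagonal e * star U := by
        simp only [Matrix.mul_assoc]
    _ = U * (Matrix.diagonal d * Matrix.diagonal e) * star U := by
        rw [hU]; simp only [Matrix.mul_one] ; simp only [Matrix.mul_assoc]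
    _ = U * Matrix.diagonal (fun i => d i * e i) * star U := by rw [h]

lemma star_unit_mul (hS : S.IsHermitian) :
    star (hS.eigenvectorUnitary : Matrix (Fin n) (Fin n) ℝ) *
      (hS.eigenvectorUnitary : Matrix (Fin n) (Fin n) ℝ) = 1 :=
  (Matrix.mem_unitaryGroup_iff').mp hS.eigenvectorUnitary.2

lemma pinvH_exists (hS : S.IsHermitian) :
    ∃ (U : Matrix (Fin n) (Fin n) ℝ) (d : Fin n → ℝ),
      star U * U = 1 ∧ S = U * Matrix.diagonal d * star U ∧
      pinvH hS = U * Matrix.diagonal (fun i => (d i)⁻¹) * star U :=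
  ⟨_, _, star_unit_mul hS, spectral_real hS, rfl⟩

lemma pinvH_comm (hS : S.IsHermitian) : S * pinvH hS = pinvH hS * S := by
  obtain ⟨U, d, hU, hSpec, hP⟩ := pinvH_exists hS
  rw [hP, hSpec, sandwich_mul _ hU, sandwich_mul _ hU]
  have : (fun i => d i * (d i)⁻¹) = (fun i => (d i)⁻¹ * d i) := by
    funext i; exact mul_comm _ _
  rw [this]

lemma mul_pinvH_mul (hS : S.IsHermitian) : S * pinvH hS * S = S := by
  obtain ⟨U, d, hU, hSpec, hP⟩ := pinvH_exists hS
  rw [hP, hSpec, sandwich_mul _ hU, sandwich_mul _ hU]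
  have hfun : (fun i => d i * (d i)⁻¹ * d i) = d := by
    funext i
    rcases eq_or_ne (d i) 0 with h | h
    · simp [h]
    · field_simp
  rw [hfun]

lemma pinvH_mul_pinvH (hS : S.IsHermitian) : pinvH hS * S * pinvH hS = pinvH hS := by
  obtain ⟨U, d, hU, hSpec, hP⟩ := pinvH_exists hS
  rw [hP, hSpec, sandwich_mul _ hU, sandwich_mul _ hU]
  have hfun : (fun i => (d i)⁻¹ * d i * (d i)⁻¹) = (fun i => (d i)⁻¹) := by
    funext i
    rcases eq_or_ne (d i) 0 with h | h
    · simp [h]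
    · field_simp
  rw [hfun]

lemma pinvH_conjTranspose (hS : S.IsHermitian) : (pinvH hS)ᴴ = pinvH hS := by
  rw [pinvH]
  simp only [Matrix.conjTranspose_mul, Matrix.star_eq_conjTranspose,
    Matrix.conjTranspose_conjTranspose, Matrix.diagonal_conjTranspose]
  have : star (fun i => (hS.eigenvalues i)⁻¹) = (fun i => (hS.eigenvalues i)⁻¹) := by
    funext i; simp
  rw [this, Matrix.mul_assoc]

lemma pinvH_posSemidef (hpsd : S.PosSemidef) : (pinvH hpsd.isHermitian).PosSemidef := by
  rw [pinvH]
  have hd : (Matrix.diagonal (fun i => (hpsd.isHermitian.eigenvalues i)⁻¹)).PosSemidef :=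
    Matrix.posSemidef_diagonal_iff.mpr fun i => inv_nonneg.mpr (hpsd.eigenvalues_nonneg i)
  have := hd.mul_mul_conjTranspose_same
    (hpsd.isHermitian.eigenvectorUnitary : Matrix (Fin n) (Fin n) ℝ)
  simpa [Matrix.star_eq_conjTranspose, Matrix.mul_assoc] using this

end PinvH


lemma frobSq_eq_trace {m l : ℕ} (M : Matrix (Fin m) (Fin l) ℝ) :
    frobSq M = (Mᴴ * M).trace := by
  simp only [frobSq, Matrix.trace, Matrix.diag, Matrix.mul_apply,
    Matrix.conjTranspose_apply, star_trivial, sq]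
  exact Finset.sum_comm

lemma frobSq_nonneg {m l : ℕ} (M : Matrix (Fin m) (Fin l) ℝ) : 0 ≤ frobSq M := by
  apply Finset.sum_nonneg; intro i _
  apply Finset.sum_nonneg; intro j _
  positivity

lemma frobSq_add_of_orth {m l : ℕ} (X Y : Matrix (Fin m) (Fin l) ℝ)
    (h : Xᴴ * Y = 0) : frobSq (X + Y) = frobSq X + frobSq Y := by
  have h' : Yᴴ * X = 0 := by
    have := congrArg Matrix.conjTranspose h
    simpa [Matrix.conjTranspose_mul] using this
  simp only [frobSq_eq_trace, Matrix.conjTranspose_add, Matrix.add_mul, Matrix.mul_add,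
    Matrix.trace_add, h, h', Matrix.trace_zero]
  ring

lemma trace_mul_nonneg {m : ℕ} {X Y : Matrix (Fin m) (Fin m) ℝ}
    (hX : X.PosSemidef) (hY : Y.PosSemidef) : 0 ≤ (X * Y).trace := by
  obtain ⟨R, rfl⟩ : ∃ R : Matrix (Fin m) (Fin m) ℝ, X = Rᴴ * R := by
    open MatrixOrder in exact CStarAlgebra.nonneg_iff_eq_star_mul_self.mp hX.nonneg
  obtain ⟨T, rfl⟩ : ∃ T : Matrix (Fin m) (Fin m) ℝ, Y = Tᴴ * T := by
    open MatrixOrder in exact CStarAlgebra.nonneg_iff_eq_star_mul_self.mp hY.nonneg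
  have h1 : (Rᴴ * R * (Tᴴ * T)).trace = ((T * Rᴴ)ᴴ * (T * Rᴴ)).trace := by
    rw [Matrix.conjTranspose_mul, Matrix.conjTranspose_conjTranspose]
    rw [show Rᴴ * R * (Tᴴ * T) = Rᴴ * (R * (Tᴴ * T)) from Matrix.mul_assoc _ _ _,
      Matrix.trace_mul_comm (Rᴴ) (R * (Tᴴ * T))]
    simp only [Matrix.mul_assoc]
  rw [h1, ← frobSq_eq_trace]
  exact frobSq_nonneg _

lemma frobSq_sub_proj {m : ℕ} (P M : Matrix (Fin m) (Fin m) ℝ)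
    (hPh : Pᴴ = P) (hPP : P * P = P) :
    frobSq (M - P * M) = frobSq M - frobSq (P * M) := by
  have horth : (M - P * M)ᴴ * (P * M) = 0 := by
    simp only [Matrix.conjTranspose_sub, Matrix.conjTranspose_mul, hPh, Matrix.sub_mul]
    rw [sub_eq_zero]
    rw [Matrix.mul_assoc Mᴴ P (P * M), ← Matrix.mul_assoc P P M, hPP]
  have := frobSq_add_of_orth (M - P * M) (P * M) horth
  rw [sub_add_cancel] at this
  linarith







/-- Step 1: projecting onto the column space of `B` (any `P` with `P*B = B`,
`P` sym idempotent) does not increase the error. -/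
lemma step1 {n : ℕ} (A B P : Matrix (Fin n) (Fin n) ℝ)
    (hPh : Pᴴ = P) (hPP : P * P = P) (hPB : P * B = B) :
    frobSq (A - P * A) ≤ frobSq (A - B) := by
  have horth : (A - P * A)ᴴ * (P * A - B) = 0 := by
    rw [Matrix.conjTranspose_sub, Matrix.conjTranspose_mul, hPh]
    rw [Matrix.sub_mul, Matrix.mul_sub, Matrix.mul_sub]
    have e1 : Aᴴ * P * (P * A) = Aᴴ * (P * A) := by
      rw [Matrix.mul_assoc Aᴴ P (P * A), ← Matrix.mul_assoc P P A, hPP]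
    have e2 : Aᴴ * P * B = Aᴴ * B := by rw [Matrix.mul_assoc, hPB]
    rw [e1, e2]
    abel
  calc frobSq (A - P * A) ≤ frobSq (A - P * A) + frobSq (P * A - B) :=
        le_add_of_nonneg_right (frobSq_nonneg _)
    _ = frobSq ((A - P * A) + (P * A - B)) := (frobSq_add_of_orth _ _ horth).symm
    _ = frobSq (A - B) := by congr 1; abel

/-- Step 3 (core): the projector `W` onto `col(A*P)` captures at least as much of `A`
as `P` does, for symmetric `A`. -/
lemma step3 {n : ℕ} (A P G Gp : Matrix (Fin n) (Fin n) ℝ)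
    (hA : Aᴴ = A) (hPh : Pᴴ = P) (hPP : P * P = P)
    (hGdef : G = P * (A * A) * P)
    (hGpH : Gpᴴ = Gp) (hGpGGp : Gp * G * Gp = Gp) (hGpComm : G * Gp = Gp * G)
    (hGGpG : G * Gp * G = G) (hGpPsd : Gp.PosSemidef) :
    (A * P * Gp * P * A)ᴴ = A * P * Gp * P * A ∧
    (A * P * Gp * P * A) * (A * P * Gp * P * A) = A * P * Gp * P * A ∧
    frobSq (P * A) ≤ frobSq ((A * P * Gp * P * A) * A) := by
  set W := A * P * Gp * P * A with hWdef
  have hWh : Wᴴ = W := by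
    rw [hWdef]
    simp only [Matrix.conjTranspose_mul, hA, hPh, hGpH, Matrix.mul_assoc]
  have hWW : W * W = W := by
    have e : W * W = A * (P * ((Gp * (P * (A * A) * P) * Gp) * (P * A))) := by
      rw [hWdef]; simp only [Matrix.mul_assoc]
    rw [e, ← hGdef, hGpGGp, hWdef]; simp only [Matrix.mul_assoc]
  refine ⟨hWh, hWW, ?_⟩
  -- trace formulations
  have hfrobP : frobSq (P * A) = (P * (A * A)).trace := by
    rw [frobSq_eq_trace, Matrix.conjTranspose_mul, hA, hPh]
    rw [Matrix.trace_mul_comm (A * P) (P * A)]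
    have : P * A * (A * P) = P * (A * A) * P := by simp only [Matrix.mul_assoc]
    rw [this, Matrix.trace_mul_comm (P * (A * A)) P, ← Matrix.mul_assoc, hPP]
  have hG_trace : G.trace = (P * (A * A)).trace := by
    rw [hGdef, Matrix.trace_mul_comm (P * (A * A)) P, ← Matrix.mul_assoc, hPP]
  -- H
  set H := P * ((A * A) * ((A * A) * P)) with hHdef
  have hfrobW : frobSq (W * A) = (Gp * H).trace := by
    rw [frobSq_eq_trace, Matrix.conjTranspose_mul, hA, hWh]
    have e1 : A * W * (W * A) = A * (W * W) * A := by simp only [Matrix.mul_assoc]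
    rw [e1, hWW, hWdef]
    have e2 : A * (A * P * Gp * P * A) * A
        = (A * (A * (P * Gp))) * (P * (A * A)) := by simp only [Matrix.mul_assoc]
    rw [e2, Matrix.trace_mul_comm]
    have e3 : P * (A * A) * (A * (A * (P * Gp))) = H * Gp := by
      rw [hHdef]; simp only [Matrix.mul_assoc]
    rw [e3, Matrix.trace_mul_comm]
  -- H - G*G is PSD
  have hHGG : ((1 - P) * ((A * A) * P))ᴴ * ((1 - P) * ((A * A) * P)) = H - G * G := by
    simp only [Matrix.conjTranspose_mul, Matrix.conjTranspose_sub, Matrix.conjTranspose_one,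
      hA, hPh]
    have hPPa : ∀ X : Matrix (Fin n) (Fin n) ℝ, P * (P * X) = P * X := fun X => by
      rw [← Matrix.mul_assoc, hPP]
    simp only [hGdef, hHdef, Matrix.mul_sub, Matrix.sub_mul, Matrix.mul_one, Matrix.one_mul,
      Matrix.mul_assoc, hPPa]
    abel
  have hPSD : (H - G * G).PosSemidef := hHGG ▸ Matrix.posSemidef_conjTranspose_mul_self _
  have h0 : 0 ≤ (Gp * (H - G * G)).trace := trace_mul_nonneg hGpPsd hPSD
  have hsplit : (Gp * (H - G * G)).trace = (Gp * H).trace - (Gp * (G * G)).trace := by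
    rw [Matrix.mul_sub, Matrix.trace_sub]
  have hGpGG : Gp * (G * G) = G := by
    rw [← Matrix.mul_assoc, ← hGpComm, hGGpG]
  rw [hfrobP, hfrobW, ← hG_trace, ← hGpGG]
  linarith


lemma key_step {n : ℕ} (A B : Matrix (Fin n) (Fin n) ℝ) (hA : Aᴴ = A) :
    ∃ Z : Matrix (Fin n) (Fin n) ℝ, frobSq (A - A * B * Z) ≤ frobSq (A - B) := by
  have hSpsd : (B * Bᴴ).PosSemidef := Matrix.posSemidef_self_mul_conjTranspose B
  have hS : (B * Bᴴ).IsHermitian := hSpsd.isHermitian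
  set Sp := pinvH hS with hSpdef
  have hSph : Spᴴ = Sp := pinvH_conjTranspose hS
  set P := B * Bᴴ * Sp with hPdef
  have hPS : P * (B * Bᴴ) = B * Bᴴ := by rw [hPdef]; exact mul_pinvH_mul hS
  have hPh : Pᴴ = P := by
    rw [hPdef, Matrix.conjTranspose_mul, hSph, hS.eq, ← pinvH_comm hS]
  have hSP : (B * Bᴴ) * P = B * Bᴴ := by
    have h2 := congrArg Matrix.conjTranspose hPS
    rwa [Matrix.conjTranspose_mul, hS.eq, hPh] at h2
  have hPP : P * P = P := by
    calc P * P = (P * (B * Bᴴ)) * Sp := by rw [hPdef]; simp only [Matrix.mul_assoc]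
      _ = P := by rw [hPS, hPdef]
  have hPB : P * B = B := by
    have hz : (B - P * B) * (B - P * B)ᴴ = 0 := by
      rw [Matrix.conjTranspose_sub, Matrix.conjTranspose_mul, hPh]
      have e1 : B * (Bᴴ * P) = B * Bᴴ := by rw [← Matrix.mul_assoc, hSP]
      have e2 : P * (B * (Bᴴ * P)) = B * Bᴴ := by rw [e1, hPS]
      simp only [Matrix.sub_mul, Matrix.mul_sub, Matrix.mul_assoc, e1, e2]
      simp only [← Matrix.mul_assoc, hPS]
      abel
    have := Matrix.self_mul_conjTranspose_eq_zero.mp hz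
    have h3 : B - P * B = 0 := this
    rw [sub_eq_zero] at h3
    exact h3.symm
  -- G
  have hGrw : (A * P)ᴴ * (A * P) = P * (A * A) * P := by
    rw [Matrix.conjTranspose_mul, hA, hPh]
    simp only [Matrix.mul_assoc]
  have hGpsd : (P * (A * A) * P).PosSemidef := hGrw ▸ Matrix.posSemidef_conjTranspose_mul_self (A * P)
  have hG : (P * (A * A) * P).IsHermitian := hGpsd.isHermitian
  set Gp := pinvH hG with hGpdef
  obtain ⟨hWh, hWW, hle⟩ := step3 A P (P * (A * A) * P) Gp hA hPh hPP rfl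
    (pinvH_conjTranspose hG) (pinvH_mul_pinvH hG) (pinvH_comm hG)
    (mul_pinvH_mul hG) (pinvH_posSemidef hGpsd)
  refine ⟨Bᴴ * (Sp * (Gp * (P * (A * A)))), ?_⟩
  have hABZ : A * B * (Bᴴ * (Sp * (Gp * (P * (A * A))))) = (A * P * Gp * P * A) * A := by
    rw [hPdef]
    simp only [Matrix.mul_assoc]
  rw [hABZ]
  calc frobSq (A - A * P * Gp * P * A * A)
      = frobSq A - frobSq ((A * P * Gp * P * A) * A) := frobSq_sub_proj _ A hWh hWW
    _ ≤ frobSq A - frobSq (P * A) := by linarith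
    _ = frobSq (A - P * A) := (frobSq_sub_proj P A hPh hPP).symm
    _ ≤ frobSq (A - B) := step1 A B P hPh hPP hPB

/-- One step of subspace iteration cannot increase the Frobenius-norm
rank-`k` approximation error of a one-sided projection: for SPSD `A`, the minimum of
`‖A − AQC‖_F` over rank-`≤k` matrices `C` is at most the minimum of `‖A − QC‖_F` over
rank-`≤k` matrices `C`. -/
theorem subspace_iteration_improves
    (n l k : ℕ) (hk : 1 ≤ k) (hkn : k < n)
    (A : Matrix (Fin n) (Fin n) ℝ) (hA : A.PosSemidef)
    (Q : Matrix (Fin n) (Fin l) ℝ) :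
    ∀ C₂ : Matrix (Fin l) (Fin n) ℝ, C₂.rank ≤ k →
      ∃ C₁ : Matrix (Fin l) (Fin n) ℝ, C₁.rank ≤ k ∧
        frobNorm (A - A * Q * C₁) ≤ frobNorm (A - Q * C₂) := by
  intro C₂ hC₂
  obtain ⟨Z, hZ⟩ := key_step A (Q * C₂) hA.isHermitian.eq
  refine ⟨C₂ * Z, le_trans (Matrix.rank_mul_le_left C₂ Z) hC₂, ?_⟩
  have hassoc : A * Q * (C₂ * Z) = A * (Q * C₂) * Z := by simp only [Matrix.mul_assoc]
  rw [frobNorm, frobNorm, hassoc]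
  exact Real.sqrt_le_sqrt hZ
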